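/- Let Ω ⊂ ℂ^N be a bounded convex open set. Let Φ be a map, continuous on the closed unit disc and holomorphic on the open unit disc Δ, with Φ(closure of Δ) contained in the closure of Ω. Suppose there is a continuous map Φ* : ∂Δ → ℂ^N such that: (i) there exists G, continuous on the closed unit disc and holomorphic on Δ, with G(ζ) = ζ·Φ*(ζ) for all ζ ∈ ∂Δ; and (ii) for every ζ ∈ ∂Δ and every w in the closure of Ω with w ≠ Φ(ζ), one has Re⟨Φ*(ζ), Φ(ζ) - w⟩ > 0, where ⟨ξ, v⟩ = Σ_{j=1}^N ξ_j v_j is the complex bilinear pairing. If Φ̃ : Δ → Ω is a holomorphic map satisfying Φ̃(ζ) = Φ(ζ) + o(|ζ - 1|³) as ζ → 1 in Δ (i.e. (Φ̃(ζ) - Φ(ζ))/|ζ - 1|³ → 0), then Φ̃(ζ) = Φ(ζ) for all ζ ∈ Δ. -/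

import Mathlib

open Metric Filter Topology

set_option maxHeartbeats 2000000

/-- Maximum modulus principle with boundary bound only in the limsup sense. -/
lemma maxmod_limsup {F : ℂ → ℂ} (hF : DifferentiableOn ℂ F (ball (0:ℂ) 1)) {C : ℝ}
    (hb : ∀ ζ ∈ sphere (0:ℂ) 1, ∀ᶠ z in 𝓝 ζ, z ∈ ball (0:ℂ) 1 → ‖F z‖ ≤ C) :
    ∀ z ∈ ball (0:ℂ) 1, ‖F z‖ ≤ C := by
  intro z hz
  set T : Set ℂ := {w | w ∈ ball (0:ℂ) 1 → ‖F w‖ ≤ C} with hT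
  set W : Set ℂ := interior T with hW
  have hsphW : sphere (0:ℂ) 1 ⊆ W := fun ζ hζ => mem_interior_iff_mem_nhds.2 (hb ζ hζ)
  set K : Set ℂ := closedBall (0:ℂ) 1 \ W with hK
  have hKcomp : IsCompact K := (isCompact_closedBall _ _).diff isOpen_interior
  have hKball : K ⊆ ball (0:ℂ) 1 := by
    intro x hx
    rcases lt_or_eq_of_le (mem_closedBall.1 hx.1) with h | h
    · exact mem_ball.2 h
    · exact absurd (hsphW (mem_sphere.2 h)) hx.2
  obtain ⟨r, hr0, hr1, hKr, hzr⟩ : ∃ r : ℝ, 0 ≤ r ∧ r < 1 ∧ K ⊆ closedBall (0:ℂ) r ∧ ‖z‖ ≤ r := by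
    rcases K.eq_empty_or_nonempty with hKe | hKne
    · exact ⟨‖z‖, norm_nonneg _, by simpa using hz, by simp [hKe], le_rfl⟩
    · obtain ⟨x0, hx0K, hx0max⟩ := hKcomp.exists_isMaxOn hKne continuous_norm.continuousOn
      refine ⟨max ‖x0‖ ‖z‖, le_trans (norm_nonneg _) (le_max_left _ _),
        max_lt (by simpa using hKball hx0K) (by simpa using hz), ?_, le_max_right _ _⟩
      intro y hy
      exact mem_closedBall_zero_iff.2 (le_trans (hx0max hy) (le_max_left _ _))
  set R : ℝ := (r + 1) / 2 with hR
  have hrR : r < R := by simp [hR]; linarith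
  have hR1 : R < 1 := by simp [hR]; linarith
  have hR0 : 0 < R := by simp [hR]; linarith
  have hsub : closedBall (0:ℂ) R ⊆ ball (0:ℂ) 1 := closedBall_subset_ball hR1
  have hd : DiffContOnCl ℂ F (ball (0:ℂ) R) := by
    refine ⟨hF.mono (ball_subset_ball hR1.le), (hF.continuousOn).mono ?_⟩
    rw [closure_ball _ hR0.ne']
    exact hsub
  have hfr : ∀ w ∈ frontier (ball (0:ℂ) R), ‖F w‖ ≤ C := by
    intro w hw
    rw [frontier_ball _ hR0.ne'] at hw
    have hwb : w ∈ ball (0:ℂ) 1 := by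
      rw [mem_ball_zero_iff]
      have := mem_sphere_zero_iff_norm.1 hw
      rw [this]; exact hR1
    have hwW : w ∈ W := by
      by_contra hwW
      have : w ∈ K := ⟨ball_subset_closedBall hwb, hwW⟩
      have := mem_closedBall_zero_iff.1 (hKr this)
      rw [mem_sphere_zero_iff_norm.1 hw] at this
      linarith
    exact interior_subset hwW hwb
  exact Complex.norm_le_of_forall_mem_frontier_norm_le isBounded_ball hd hfr
    (subset_closure (mem_ball_zero_iff.2 (lt_of_le_of_lt hzr hrR)))

theorem stationary_disc_uniqueness (N : ℕ)
    (Ω : Set (Fin N → ℂ)) (hΩopen : IsOpen Ω) (hΩbdd : Bornology.IsBounded Ω)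
    (hΩconv : Convex ℝ Ω)
    (Φ : ℂ → (Fin N → ℂ))
    (hΦcont : ContinuousOn Φ (closedBall (0 : ℂ) 1))
    (hΦhol : DifferentiableOn ℂ Φ (ball (0 : ℂ) 1))
    (hΦmap : Set.MapsTo Φ (closedBall (0 : ℂ) 1) (closure Ω))
    (Φs : ℂ → (Fin N → ℂ))
    (hΦscont : ContinuousOn Φs (sphere (0 : ℂ) 1))
    (hlift : ∃ G : ℂ → (Fin N → ℂ), ContinuousOn G (closedBall (0 : ℂ) 1) ∧
      DifferentiableOn ℂ G (ball (0 : ℂ) 1) ∧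
      ∀ ζ ∈ sphere (0 : ℂ) 1, G ζ = ζ • Φs ζ)
    (hsupport : ∀ ζ ∈ sphere (0 : ℂ) 1, ∀ w ∈ closure Ω, w ≠ Φ ζ →
      0 < (∑ j, Φs ζ j * (Φ ζ j - w j)).re)
    (Φt : ℂ → (Fin N → ℂ))
    (hΦthol : DifferentiableOn ℂ Φt (ball (0 : ℂ) 1))
    (hΦtmap : Set.MapsTo Φt (ball (0 : ℂ) 1) Ω)
    (hasym : Tendsto (fun ζ : ℂ => (‖ζ - 1‖ ^ 3)⁻¹ • (Φt ζ - Φ ζ))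
      (nhdsWithin 1 (ball (0 : ℂ) 1)) (nhds 0)) :
    ∀ ζ ∈ ball (0 : ℂ) 1, Φt ζ = Φ ζ := by
  obtain ⟨G, hGcont, hGhol, hGlift⟩ := hlift
  set h : ℂ → ℂ := fun ζ => ∑ j, G ζ j * (Φ ζ j - Φt ζ j) with hhdef
  set g : ℂ → ℂ := fun ζ => -h ζ / (1 - ζ) ^ 2 with hgdef
  have hone : ∀ z ∈ ball (0:ℂ) 1, (1 : ℂ) - z ≠ 0 := by
    intro z hz hez
    have : z = 1 := by linear_combination -hez
    rw [this] at hz; simp at hz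
  have hnot1 : ∀ z ∈ ball (0:ℂ) 1, z ≠ 1 := by
    intro z hz hez; exact hone z hz (by rw [hez]; ring)
  -- differentiability
  have hhd : DifferentiableOn ℂ h (ball (0:ℂ) 1) := by
    apply DifferentiableOn.fun_sum
    intro j _
    exact ((differentiableOn_pi.1 hGhol j).mul
      ((differentiableOn_pi.1 hΦhol j).sub (differentiableOn_pi.1 hΦthol j)))
  have hgd : DifferentiableOn ℂ g (ball (0:ℂ) 1) := by
    apply DifferentiableOn.div hhd.neg
    · exact (differentiableOn_const _).sub differentiableOn_id |>.pow 2
    · intro z hz; exact pow_ne_zero 2 (hone z hz)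
  -- key subsequence lemma
  have key : ∀ ζ1 ∈ sphere (0:ℂ) 1, ∀ u : ℕ → ℂ, (∀ n, u n ∈ ball (0:ℂ) 1) →
      Tendsto u atTop (𝓝 ζ1) → ∃ (φ : ℕ → ℕ) (w : Fin N → ℂ), StrictMono φ ∧ w ∈ closure Ω ∧
        Tendsto (fun n => Φt (u (φ n))) atTop (𝓝 w) ∧
        Tendsto (fun n => h (u (φ n))) atTop (𝓝 (ζ1 * ∑ j, Φs ζ1 j * (Φ ζ1 j - w j))) := by
    intro ζ1 hζ1 u hu hulim
    have hcomp : IsCompact (closure Ω) := hΩbdd.isCompact_closure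
    obtain ⟨w, hwmem, φ, hφ, hwlim⟩ :=
      hcomp.tendsto_subseq (fun n => subset_closure (hΦtmap (hu n)))
    refine ⟨φ, w, hφ, hwmem, hwlim, ?_⟩
    have huφ : Tendsto (fun n => u (φ n)) atTop (𝓝 ζ1) := hulim.comp hφ.tendsto_atTop
    have huφ' : Tendsto (fun n => u (φ n)) atTop (𝓝[closedBall (0:ℂ) 1] ζ1) :=
      tendsto_nhdsWithin_of_tendsto_nhds_of_eventually_within _ huφ
        (Eventually.of_forall fun n => ball_subset_closedBall (hu (φ n)))
    have hG : Tendsto (fun n => G (u (φ n))) atTop (𝓝 (G ζ1)) :=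
      (hGcont ζ1 (sphere_subset_closedBall hζ1)).tendsto.comp huφ'
    have hΦl : Tendsto (fun n => Φ (u (φ n))) atTop (𝓝 (Φ ζ1)) :=
      (hΦcont ζ1 (sphere_subset_closedBall hζ1)).tendsto.comp huφ'
    have hsum : Tendsto (fun n => h (u (φ n))) atTop (𝓝 (∑ j, G ζ1 j * (Φ ζ1 j - w j))) := by
      refine tendsto_finset_sum _ fun j _ => ?_
      exact (tendsto_pi_nhds.1 hG j).mul
        ((tendsto_pi_nhds.1 hΦl j).sub (tendsto_pi_nhds.1 hwlim j))
    have hGval : G ζ1 = ζ1 • Φs ζ1 := hGlift ζ1 hζ1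
    have : (∑ j, G ζ1 j * (Φ ζ1 j - w j)) = ζ1 * ∑ j, Φs ζ1 j * (Φ ζ1 j - w j) := by
      rw [hGval, Finset.mul_sum]
      refine Finset.sum_congr rfl fun j _ => ?_
      simp only [Pi.smul_apply, smul_eq_mul]
      ring
    rwa [this] at hsum

  -- the correction term
  set T : ℂ → ℂ := fun ζ => ∑ j, G ζ j * ((‖ζ - 1‖ ^ 3)⁻¹ • (Φt ζ - Φ ζ)) j
    with hTdef
  have h1cb : (1:ℂ) ∈ closedBall (0:ℂ) 1 := by simp
  have hTlim : Tendsto T (𝓝[ball (0:ℂ) 1] 1) (𝓝 0) := by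
    have hGlim : Tendsto G (𝓝[ball (0:ℂ) 1] 1) (𝓝 (G 1)) :=
      (hGcont 1 h1cb).mono_left (nhdsWithin_mono _ ball_subset_closedBall)
    have hsum := tendsto_finset_sum (Finset.univ : Finset (Fin N)) fun j _ =>
      (tendsto_pi_nhds.1 hGlim j).mul (tendsto_pi_nhds.1 hasym j)
    rw [hTdef]
    convert hsum using 2
    simp
  have hfac : ∀ ζ ∈ ball (0:ℂ) 1,
      g ζ = ((‖ζ - 1‖ ^ 3 : ℝ) : ℂ) / (1 - ζ) ^ 2 * T ζ := by
    intro ζ hζ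
    have hζ1 : ζ ≠ 1 := hnot1 ζ hζ
    have hc : ‖ζ - 1‖ ≠ 0 := by
      simpa [sub_eq_zero] using hζ1
    have hc3 : (‖ζ - 1‖ ^ 3 : ℝ) ≠ 0 := pow_ne_zero 3 hc
    have hd : (1:ℂ) - ζ ≠ 0 := hone ζ hζ
    have hT : T ζ = (((‖ζ - 1‖ ^ 3)⁻¹ : ℝ) : ℂ) * (-h ζ) := by
      rw [hhdef]
      simp only [hTdef, Pi.smul_apply, Pi.sub_apply, Complex.real_smul]
      rw [← Finset.sum_neg_distrib, Finset.mul_sum]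
      refine Finset.sum_congr rfl fun j _ => ?_
      ring
    rw [hT, hgdef]
    have hcc : ((‖ζ - 1‖ : ℝ) : ℂ) ≠ 0 := by exact_mod_cast hc
    push_cast
    rw [div_mul_eq_mul_div, ← mul_assoc, mul_inv_cancel₀ (pow_ne_zero 3 hcc), one_mul]
  have habs1 : Tendsto (fun ζ : ℂ => ‖ζ - 1‖) (𝓝[ball (0:ℂ) 1] 1) (𝓝 0) := by
    have : ContinuousAt (fun ζ : ℂ => ‖ζ - 1‖) 1 :=
      (continuous_norm.comp (continuous_id.sub continuous_const)).continuousAt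
    have h2 := this.continuousWithinAt (s := ball (0:ℂ) 1)
    simpa using h2.tendsto
  have hfactor : Tendsto (fun ζ : ℂ => ((‖ζ - 1‖ ^ 3 : ℝ) : ℂ) / (1 - ζ) ^ 2)
      (𝓝[ball (0:ℂ) 1] 1) (𝓝 0) := by
    rw [tendsto_zero_iff_norm_tendsto_zero]
    refine habs1.congr' ?_
    filter_upwards [eventually_mem_nhdsWithin] with ζ hζ
    have hζ1 : ζ ≠ 1 := hnot1 ζ hζ
    have hc : ‖ζ - 1‖ ≠ 0 := by simpa [sub_eq_zero] using hζ1
    have h21 : ‖1 - ζ‖ = ‖ζ - 1‖ := by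
      rw [← neg_sub ζ 1, norm_neg]
    rw [norm_div, Complex.norm_real, Real.norm_eq_abs, norm_pow, h21,
      abs_of_nonneg (by positivity : (0:ℝ) ≤ ‖ζ - 1‖ ^ 3)]
    field_simp
  have hg1 : Tendsto g (𝓝[ball (0:ℂ) 1] 1) (𝓝 0) := by
    have := hfactor.mul hTlim
    rw [mul_zero] at this
    refine this.congr' ?_
    filter_upwards [eventually_mem_nhdsWithin] with ζ hζ
    exact (hfac ζ hζ).symm
  -- Step A/B: real part of g is nonnegative
  have hRe : ∀ z ∈ ball (0:ℂ) 1, 0 ≤ (g z).re := by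
    have hA : ∀ ε : ℝ, 0 < ε → ∀ z ∈ ball (0:ℂ) 1, -ε ≤ (g z).re := by
      intro ε hε z hz
      have hFd : DifferentiableOn ℂ (fun ζ => Complex.exp (-g ζ)) (ball (0:ℂ) 1) :=
        hgd.neg.cexp
      have hbound := maxmod_limsup hFd (C := Real.exp ε) ?_ z hz
      · rw [Complex.norm_exp, Real.exp_le_exp, Complex.neg_re] at hbound
        linarith
      · intro ζ1 hζ1
        rw [← eventually_nhdsWithin_iff]
        have hgoal : (∀ᶠ w in 𝓝[ball (0:ℂ) 1] ζ1, -ε ≤ (g w).re) →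
            ∀ᶠ w in 𝓝[ball (0:ℂ) 1] ζ1, ‖Complex.exp (-g w)‖ ≤ Real.exp ε := by
          intro hev
          filter_upwards [hev] with w hw
          rw [Complex.norm_exp, Real.exp_le_exp, Complex.neg_re]
          linarith
        apply hgoal
        by_cases hζe : ζ1 = (1:ℂ)
        · subst hζe
          have hev := Metric.tendsto_nhds.1 hg1 ε hε
          filter_upwards [hev] with w hw
          rw [dist_zero_right] at hw
          linarith [Complex.abs_re_le_norm (g w), neg_abs_le ((g w).re)]
        · by_contra hcon
          rw [Filter.not_eventually] at hcon
          have hfreq : ∃ᶠ w in 𝓝[ball (0:ℂ) 1] ζ1, w ∈ ball (0:ℂ) 1 ∧ (g w).re < -ε := by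
            refine (eventually_mem_nhdsWithin.and_frequently (hcon.mono ?_))
            intro w hw; push_neg at hw; exact hw
          obtain ⟨u, hul, hup⟩ := Filter.exists_seq_forall_of_frequently hfreq
          have humem : ∀ n, u n ∈ ball (0:ℂ) 1 := fun n => (hup n).1
          have hulim : Tendsto u atTop (𝓝 ζ1) := hul.mono_right nhdsWithin_le_nhds
          obtain ⟨φ, w, hφ, hwΩ, hwlim, hhlim⟩ := key ζ1 hζ1 u humem hulim
          set S : ℂ := ∑ j, Φs ζ1 j * (Φ ζ1 j - w j) with hS
          have hζne : ζ1 ≠ 1 := hζe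
          have hdne : (1:ℂ) - ζ1 ≠ 0 := sub_ne_zero.2 (Ne.symm hζne)
          have huφ : Tendsto (fun n => u (φ n)) atTop (𝓝 ζ1) := hulim.comp hφ.tendsto_atTop
          have hden : Tendsto (fun n => (1 - u (φ n)) ^ 2) atTop (𝓝 ((1 - ζ1) ^ 2)) :=
            (tendsto_const_nhds.sub huφ).pow 2
          have hglim : Tendsto (fun n => g (u (φ n))) atTop (𝓝 (-(ζ1 * S) / (1 - ζ1) ^ 2)) := by
            simp only [hgdef]
            exact (hhlim.neg).div hden (pow_ne_zero 2 hdne)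
          have habs : ‖ζ1‖ = 1 := by
            have := mem_sphere_zero_iff_norm.1 hζ1
            exact this
          have hcj : ζ1 * (starRingEnd ℂ) ζ1 = 1 := by
            rw [Complex.mul_conj]
            norm_cast
            rw [Complex.normSq_eq_norm_sq, habs]; norm_num
          have h2 : ((Complex.normSq (1 - ζ1) : ℝ) : ℂ) = (1 - ζ1) * (1 - (starRingEnd ℂ) ζ1) := by
            rw [← Complex.mul_conj]; simp
          have hns : Complex.normSq (1 - ζ1) ≠ 0 := by
            rwa [ne_eq, Complex.normSq_eq_zero]
          have hnsc : ((Complex.normSq (1 - ζ1) : ℝ) : ℂ) ≠ 0 := by exact_mod_cast hns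
          have hL : -(ζ1 * S) / (1 - ζ1) ^ 2 = (((Complex.normSq (1 - ζ1))⁻¹ : ℝ) : ℂ) * S := by
            rw [Complex.ofReal_inv, eq_comm, inv_mul_eq_div,
              div_eq_div_iff hnsc (pow_ne_zero 2 hdne), h2]
            linear_combination (-S * (1 - ζ1)) * hcj
          have hrelim : Tendsto (fun n => (g (u (φ n))).re) atTop
              (𝓝 (((((Complex.normSq (1 - ζ1))⁻¹ : ℝ) : ℂ) * S).re)) := by
            rw [← hL]; exact (Complex.continuous_re.tendsto _).comp hglim
          have hle : (((((Complex.normSq (1 - ζ1))⁻¹ : ℝ) : ℂ) * S).re) ≤ -ε :=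
            le_of_tendsto hrelim (Eventually.of_forall fun n => (hup (φ n)).2.le)
          have hSre : 0 ≤ S.re := by
            by_cases hw : w = Φ ζ1
            · simp [hS, hw]
            · exact (hsupport ζ1 hζ1 w hwΩ hw).le
          rw [Complex.re_ofReal_mul] at hle
          have hpos : 0 ≤ (Complex.normSq (1 - ζ1))⁻¹ * S.re :=
            mul_nonneg (inv_nonneg.2 (Complex.normSq_nonneg _)) hSre
          linarith
    intro z hz
    by_contra hlt
    push_neg at hlt
    have := hA (-(g z).re / 2) (by linarith) z hz
    linarith
  -- Step D: g vanishes identically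
  have hFd : DifferentiableOn ℂ (fun ζ => Complex.exp (-g ζ)) (ball (0:ℂ) 1) := hgd.neg.cexp
  have hF1 : ∀ z ∈ ball (0:ℂ) 1, ‖Complex.exp (-g z)‖ ≤ 1 := by
    intro z hz
    rw [Complex.norm_exp, Complex.neg_re]
    exact Real.exp_le_one_iff.2 (by linarith [hRe z hz])
  have hh0 : ∀ z ∈ ball (0:ℂ) 1, h z = 0 := by
    have hex : ∃ z0 ∈ ball (0:ℂ) 1, ‖Complex.exp (-g z0)‖ = 1 := by
      by_contra hc1
      push_neg at hc1
      have hlt : ∀ z ∈ ball (0:ℂ) 1, ‖Complex.exp (-g z)‖ < 1 := fun z hz =>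
        lt_of_le_of_ne (hF1 z hz) (hc1 z hz)
      set a : ℂ := Complex.exp (-g 0) with ha
      have h0b : (0:ℂ) ∈ ball (0:ℂ) 1 := by simp
      have hρ : ‖a‖ < 1 := hlt 0 h0b
      have hidentity : ∀ w : ℂ, Complex.normSq (1 - (starRingEnd ℂ) a * w)
          = Complex.normSq (w - a) + (1 - Complex.normSq a) * (1 - Complex.normSq w) := by
        intro w
        simp only [Complex.normSq_apply, Complex.sub_re, Complex.sub_im, Complex.mul_re,
          Complex.mul_im, Complex.one_re, Complex.one_im, Complex.conj_re, Complex.conj_im]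
        ring
      have hdenne : ∀ w : ℂ, ‖w‖ ≤ 1 → (1:ℂ) - (starRingEnd ℂ) a * w ≠ 0 := by
        intro w hw he
        have h1 : ‖(starRingEnd ℂ) a * w‖ < 1 := by
          rw [norm_mul, Complex.norm_conj]
          calc ‖a‖ * ‖w‖ ≤ ‖a‖ * 1 :=
                mul_le_mul_of_nonneg_left hw (norm_nonneg a)
            _ = ‖a‖ := mul_one _
            _ < 1 := hρ
        have heq1 : (starRingEnd ℂ) a * w = 1 := by linear_combination -he
        rw [heq1] at h1; simp at h1
      set Fm : ℂ → ℂ := fun ζ =>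
        (Complex.exp (-g ζ) - a) / (1 - (starRingEnd ℂ) a * Complex.exp (-g ζ)) with hFmdef
      have hFmd : DifferentiableOn ℂ Fm (ball (0:ℂ) 1) := by
        apply DifferentiableOn.div (hFd.sub (differentiableOn_const _))
        · exact (differentiableOn_const _).sub ((differentiableOn_const _).mul hFd)
        · intro z hz
          exact hdenne _ (hlt z hz).le
      have hFm0 : Fm 0 = 0 := by
        show (Complex.exp (-g 0) - a) / _ = 0
        rw [← ha, sub_self, zero_div]
      have hmaps : Set.MapsTo Fm (ball (0:ℂ) 1) (ball (0:ℂ) 1) := by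
        intro z hz
        rw [mem_ball_zero_iff]
        simp only [hFmdef]
        set w := Complex.exp (-g z) with hw
        have hw1 : ‖w‖ < 1 := hlt z hz
        have hdh : (1:ℂ) - (starRingEnd ℂ) a * w ≠ 0 := hdenne w hw1.le
        rw [norm_div, div_lt_one (norm_pos_iff.2 hdh)]
        rw [Complex.norm_def, Complex.norm_def]
        apply Real.sqrt_lt_sqrt (Complex.normSq_nonneg _)
        rw [hidentity w]
        have hApos : 0 < 1 - Complex.normSq a := by
          rw [Complex.normSq_eq_norm_sq]; nlinarith [norm_nonneg a]
        have hwpos : 0 < 1 - Complex.normSq w := by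
          rw [Complex.normSq_eq_norm_sq]; nlinarith [norm_nonneg w]
        nlinarith
      have hSch : ∀ z : ℂ, ‖z‖ < 1 → ‖Fm z‖ ≤ ‖z‖ :=
        fun z hz => Complex.norm_le_norm_of_mapsTo_ball hFmd (hmaps.mono_right ball_subset_closedBall) hFm0 hz
      have hkey : ∀ r : ℝ, r ∈ Set.Ioo (0:ℝ) 1 →
          (1 - ‖a‖) / 4 ≤ ‖T (r:ℂ)‖ := by
        intro r hr
        have h1r : 0 < 1 - r := by linarith [hr.2]
        have hrb : (r:ℂ) ∈ ball (0:ℂ) 1 := by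
          rw [mem_ball_zero_iff, Complex.norm_real, Real.norm_eq_abs, abs_of_pos hr.1]
          exact hr.2
        have habsr : ‖(r:ℂ)‖ = r := by rw [Complex.norm_real, Real.norm_eq_abs, abs_of_pos hr.1]
        have hs := hSch (r:ℂ) (by rw [habsr]; exact hr.2)
        rw [habsr] at hs
        simp only [hFmdef] at hs
        set w := Complex.exp (-g (r:ℂ)) with hwdef
        have hw1 : ‖w‖ < 1 := hlt _ hrb
        have hdh : (1:ℂ) - (starRingEnd ℂ) a * w ≠ 0 := hdenne w hw1.le
        have hs2 : ‖w - a‖ ≤ r * ‖1 - (starRingEnd ℂ) a * w‖ := by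
          rw [norm_div, div_le_iff₀ (norm_pos_iff.2 hdh)] at hs
          linarith [hs]
        have hsq : Complex.normSq (w - a) ≤ r^2 * Complex.normSq (1 - (starRingEnd ℂ) a * w) := by
          rw [← Complex.sq_norm, ← Complex.sq_norm]
          nlinarith [norm_nonneg (w - a), norm_nonneg (1 - (starRingEnd ℂ) a * w)]
        have hlb : (1 - ‖a‖) ≤ ‖1 - (starRingEnd ℂ) a * w‖ := by
          have h1 : ‖(starRingEnd ℂ) a * w‖ ≤ ‖a‖ := by
            rw [norm_mul, Complex.norm_conj]
            nlinarith [norm_nonneg a, norm_nonneg w]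
          have h2 := norm_sub_norm_le (1:ℂ) ((starRingEnd ℂ) a * w)
          rw [norm_one] at h2
          linarith
        -- quantitative Schwarz–Pick estimate
        have hxb : 1 - ‖w‖ ≥ (1 - r) * (1 - ‖a‖) / 4 := by
          have hid := hidentity w
          rw [Complex.normSq_eq_norm_sq a, Complex.normSq_eq_norm_sq w] at hid
          set ρ := ‖a‖
          set x := ‖w‖
          set D := ‖1 - (starRingEnd ℂ) a * w‖
          have hidD : Complex.normSq (1 - (starRingEnd ℂ) a * w) = D^2 := (Complex.sq_norm _).symm
          have hwa : Complex.normSq (w - a) = (‖w - a‖)^2 := (Complex.sq_norm _).symm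
          rw [hidD, hwa] at hid
          rw [hidD] at hsq
          rw [hwa] at hsq
          have hρ0 : 0 ≤ ρ := norm_nonneg a
          have hx0 : 0 ≤ x := norm_nonneg w
          have hρ1 : ρ < 1 := hρ
          have hx1 : x < 1 := hw1
          have hD0 : 0 ≤ D := norm_nonneg _
          have hpos : 0 < 1 - ρ := sub_pos.2 hρ1
          have s1 : (1 - r^2) * D^2 ≤ (1 - ρ^2) * (1 - x^2) := by nlinarith [hsq, hid]
          have s2 : (1 - ρ)^2 ≤ D^2 := pow_le_pow_left₀ (by linarith) hlb 2
          have s3 : (1 - r^2) * (1 - ρ)^2 ≤ (1 - ρ^2) * (1 - x^2) :=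
            le_trans (mul_le_mul_of_nonneg_left s2 (by nlinarith [hr.1, hr.2])) s1
          have s3' : (1 - ρ) * ((1 - r^2) * (1 - ρ)) ≤ (1 - ρ) * ((1 + ρ) * (1 - x^2)) := by
            linear_combination s3
          have h5 : (1 - r^2) * (1 - ρ) ≤ (1 + ρ) * (1 - x^2) := le_of_mul_le_mul_left s3' hpos
          have hρx : ρ * x ≤ 1 := by
            calc ρ * x ≤ 1 * 1 := mul_le_mul hρ1.le hx1.le hx0 (by norm_num)
              _ = 1 := by norm_num
          have e1 : 0 ≤ (1 - x) * (4 - (1 + ρ) * (1 + x)) := by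
            apply mul_nonneg (by linarith)
            nlinarith [hρx]
          have h6 : (1 + ρ) * (1 - x^2) ≤ 4 * (1 - x) := by nlinarith [e1]
          have h7 : (1 - r) * (1 - ρ) ≤ (1 - r^2) * (1 - ρ) := by nlinarith [mul_nonneg (mul_nonneg hpos.le hr.1.le) h1r.le]
          linarith
        have hxre : 1 - ‖w‖ ≤ (g (r:ℂ)).re := by
          have hxe : ‖w‖ = Real.exp (-(g (r:ℂ)).re) := by
            rw [hwdef, Complex.norm_exp, Complex.neg_re]
          have hh := Real.add_one_le_exp (-(g (r:ℂ)).re)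
          rw [← hxe] at hh; linarith
        have habsg : ‖g (r:ℂ)‖ = (1 - r) * ‖T (r:ℂ)‖ := by
          have hfacr := hfac (r:ℂ) hrb
          have habsr1 : ‖(r:ℂ) - 1‖ = 1 - r := by
            rw [show ((r:ℂ) - 1) = (((r - 1 : ℝ)):ℂ) by push_cast; ring, Complex.norm_real, Real.norm_eq_abs,
              abs_of_neg (by linarith [hr.2] : r - 1 < 0)]
            ring
          have habsr2 : ‖1 - (r:ℂ)‖ = 1 - r := by
            rw [show ((1:ℂ) - r) = (((1 - r : ℝ)):ℂ) by push_cast; ring, Complex.norm_real, Real.norm_eq_abs,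
              abs_of_pos h1r]
          rw [hfacr, norm_mul, norm_div, Complex.norm_real, Real.norm_eq_abs,
            abs_of_nonneg (by positivity : (0:ℝ) ≤ ‖(r:ℂ) - 1‖ ^ 3),
            norm_pow, habsr1, habsr2]
          have hpow : (1 - r)^3 / (1 - r)^2 = 1 - r := by
            field_simp [h1r.ne']
          rw [hpow]
        have hgub : (g (r:ℂ)).re ≤ (1 - r) * ‖T (r:ℂ)‖ := by
          calc (g (r:ℂ)).re ≤ ‖g (r:ℂ)‖ := Complex.re_le_norm _
            _ = _ := habsg
        have h4 : (1 - r) * ((1 - ‖a‖) / 4) ≤ (1 - r) * ‖T (r:ℂ)‖ := by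
          linarith
        exact le_of_mul_le_mul_left h4 h1r
      have hmap2 : Tendsto (fun t : ℝ => (t:ℂ)) (𝓝[Set.Ioo (0:ℝ) 1] 1) (𝓝[ball (0:ℂ) 1] 1) := by
        apply tendsto_nhdsWithin_of_tendsto_nhds_of_eventually_within
        · have hcont : Tendsto (fun t : ℝ => (t:ℂ)) (𝓝 1) (𝓝 1) := by
            have := Complex.continuous_ofReal.tendsto (1:ℝ)
            simpa using this
          exact hcont.mono_left nhdsWithin_le_nhds
        · filter_upwards [eventually_mem_nhdsWithin] with t ht
          rw [mem_ball_zero_iff, Complex.norm_real, Real.norm_eq_abs, abs_of_pos ht.1]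
          exact ht.2
      have hTt : Tendsto (fun t : ℝ => ‖T (t:ℂ)‖) (𝓝[Set.Ioo (0:ℝ) 1] 1) (𝓝 0) := by
        have := (continuous_norm.tendsto 0).comp (hTlim.comp hmap2)
        simpa [Function.comp_def] using this
      haveI hnb : (𝓝[Set.Ioo (0:ℝ) 1] (1:ℝ)).NeBot := by
        apply mem_closure_iff_nhdsWithin_neBot.1
        rw [closure_Ioo (by norm_num : (0:ℝ) ≠ 1)]
        exact Set.right_mem_Icc.2 (by norm_num)
      have hge : (1 - ‖a‖) / 4 ≤ 0 := by
        apply ge_of_tendsto hTt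
        filter_upwards [eventually_mem_nhdsWithin] with t ht
        exact hkey t ht
      linarith
    obtain ⟨z0, hz0, hz0n⟩ := hex
    have hmax : IsMaxOn (norm ∘ fun ζ => Complex.exp (-g ζ)) (ball (0:ℂ) 1) z0 := by
      intro z hz
      show ‖Complex.exp (-g z)‖ ≤ ‖Complex.exp (-g z0)‖
      rw [hz0n]
      exact hF1 z hz
    have heq := Complex.eqOn_of_isPreconnected_of_isMaxOn_norm
      (convex_ball (0:ℂ) 1).isPreconnected isOpen_ball hFd hz0 hmax
    have hgc : ∀ x ∈ ball (0:ℂ) 1, ∀ y ∈ ball (0:ℂ) 1, g x = g y := by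
      intro x hx y hy
      refine (convex_ball (0:ℂ) 1).is_const_of_fderivWithin_eq_zero hgd ?_ hx hy
      intro ζ hζ
      have hgx : DifferentiableAt ℂ g ζ := (hgd ζ hζ).differentiableAt (isOpen_ball.mem_nhds hζ)
      have hder : HasDerivAt (fun ξ => Complex.exp (-g ξ)) (Complex.exp (-g ζ) * -(deriv g ζ)) ζ :=
        (hgx.hasDerivAt.neg).cexp
      have hconstF : HasDerivAt (fun ξ => Complex.exp (-g ξ)) 0 ζ := by
        have hev : (fun ξ => Complex.exp (-g ξ)) =ᶠ[𝓝 ζ] fun _ => Complex.exp (-g z0) := by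
          filter_upwards [isOpen_ball.mem_nhds hζ] with y hy
          exact heq hy
        exact (hasDerivAt_const ζ _).congr_of_eventuallyEq hev
      have h0 : Complex.exp (-g ζ) * -(deriv g ζ) = 0 := hder.unique hconstF
      have hdg : deriv g ζ = 0 := by
        rcases mul_eq_zero.1 h0 with h1 | h1
        · exact absurd h1 (Complex.exp_ne_zero _)
        · simpa using h1
      have h1 : HasDerivAt g 0 ζ := hdg ▸ hgx.hasDerivAt
      have h00 : HasFDerivAt g (0 : ℂ →L[ℂ] ℂ) ζ := by
        have h2 := h1.hasFDerivAt
        have h3 : ContinuousLinearMap.toSpanSingleton ℂ (0:ℂ) = 0 := by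
          ext z; simp
        rwa [h3] at h2
      exact h00.hasFDerivWithinAt.fderivWithin (isOpen_ball.uniqueDiffWithinAt hζ)
    have hgconst : ∀ z ∈ ball (0:ℂ) 1, g z = g 0 := fun z hz => hgc z hz 0 (by simp)
    haveI hnb1 : (𝓝[ball (0:ℂ) 1] (1:ℂ)).NeBot := by
      apply mem_closure_iff_nhdsWithin_neBot.1
      rw [closure_ball (0:ℂ) one_ne_zero]
      simp
    have hg00 : g 0 = 0 := by
      have ht : Tendsto g (𝓝[ball (0:ℂ) 1] 1) (𝓝 (g 0)) := by
        refine tendsto_const_nhds.congr' ?_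
        filter_upwards [eventually_mem_nhdsWithin] with z hz
        exact (hgconst z hz).symm
      exact tendsto_nhds_unique ht hg1
    intro z hz
    have hgz : g z = 0 := (hgconst z hz).trans hg00
    rw [hgdef] at hgz
    simp only at hgz
    rcases div_eq_zero_iff.1 hgz with h1 | h1
    · simpa using h1
    · exact absurd h1 (pow_ne_zero 2 (hone z hz))
  -- Step E: boundary continuity of Φt with boundary value Φ
  have hbd : ∀ ζ1 ∈ sphere (0:ℂ) 1, Tendsto Φt (𝓝[ball (0:ℂ) 1] ζ1) (𝓝 (Φ ζ1)) := by
    intro ζ1 hζ1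
    rw [Metric.tendsto_nhds]
    intro ε hε
    by_contra hcon
    rw [Filter.not_eventually] at hcon
    have hfreq : ∃ᶠ z in 𝓝[ball (0:ℂ) 1] ζ1, z ∈ ball (0:ℂ) 1 ∧ ε ≤ dist (Φt z) (Φ ζ1) := by
      refine eventually_mem_nhdsWithin.and_frequently (hcon.mono ?_)
      intro z hz; push_neg at hz; exact hz
    obtain ⟨u, hul, hup⟩ := Filter.exists_seq_forall_of_frequently hfreq
    have humem : ∀ n, u n ∈ ball (0:ℂ) 1 := fun n => (hup n).1
    have hulim : Tendsto u atTop (𝓝 ζ1) := hul.mono_right nhdsWithin_le_nhds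
    obtain ⟨φ, w, hφ, hwΩ, hwlim, hhlim⟩ := key ζ1 hζ1 u humem hulim
    have hdistlim : Tendsto (fun n => dist (Φt (u (φ n))) (Φ ζ1)) atTop (𝓝 (dist w (Φ ζ1))) :=
      hwlim.dist tendsto_const_nhds
    have hdge : ε ≤ dist w (Φ ζ1) :=
      ge_of_tendsto hdistlim (Eventually.of_forall fun n => (hup (φ n)).2)
    have hwne : w ≠ Φ ζ1 := by
      intro hwe; rw [hwe] at hdge; simp at hdge; linarith
    have hzero : Tendsto (fun n => h (u (φ n))) atTop (𝓝 0) := by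
      refine Tendsto.congr (fun n => (hh0 _ (humem (φ n))).symm) tendsto_const_nhds
    have hlim0 : ζ1 * (∑ j, Φs ζ1 j * (Φ ζ1 j - w j)) = 0 := tendsto_nhds_unique hhlim hzero
    have hζne0 : ζ1 ≠ 0 := by
      intro hze; rw [hze] at hζ1; simp at hζ1
    have hS0 : (∑ j, Φs ζ1 j * (Φ ζ1 j - w j)) = 0 := by
      rcases mul_eq_zero.1 hlim0 with hcc | hcc
      · exact absurd hcc hζne0
      · exact hcc
    have hpos := hsupport ζ1 hζ1 w hwΩ hwne
    rw [hS0] at hpos; simp at hpos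
  -- Step F: conclude by the maximum principle applied to each component
  intro z hz
  have hdiff : ∀ j : Fin N, DifferentiableOn ℂ (fun ζ => Φt ζ j - Φ ζ j) (ball (0:ℂ) 1) :=
    fun j => (differentiableOn_pi.1 hΦthol j).sub (differentiableOn_pi.1 hΦhol j)
  have hbnd : ∀ ε : ℝ, 0 < ε → ∀ j : Fin N, ‖Φt z j - Φ z j‖ ≤ ε := by
    intro ε hε j
    refine maxmod_limsup (hdiff j) ?_ z hz
    intro ζ1 hζ1
    rw [← eventually_nhdsWithin_iff]
    have hΦlim : Tendsto Φ (𝓝[ball (0:ℂ) 1] ζ1) (𝓝 (Φ ζ1)) :=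
      (hΦcont ζ1 (sphere_subset_closedBall hζ1)).mono_left
        (nhdsWithin_mono _ ball_subset_closedBall)
    have hdlim : Tendsto (fun ζ => Φt ζ j - Φ ζ j) (𝓝[ball (0:ℂ) 1] ζ1) (𝓝 0) := by
      have := (tendsto_pi_nhds.1 (hbd ζ1 hζ1) j).sub (tendsto_pi_nhds.1 hΦlim j)
      simpa using this
    filter_upwards [Metric.tendsto_nhds.1 hdlim ε hε] with ζ hζd
    rw [dist_zero_right] at hζd
    exact hζd.le
  funext j
  have hj : Φt z j - Φ z j = 0 := by
    by_contra hne
    have hpos : 0 < ‖Φt z j - Φ z j‖ := norm_pos_iff.2 (sub_ne_zero.2 ?_)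
    · have := hbnd (‖Φt z j - Φ z j‖ / 2) (by linarith) j
      linarith
    · exact fun hEq => hne (by rw [hEq]; ring)
  exact sub_eq_zero.1 hj
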